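/- Let A and B be testers with the same normalization state ρ and canonical POVMs P and Q. If P and Q are λ-compatible as POVMs, then A and B are λ-compatible as testers. Consequently R_T(A,B) ≤ R_M(P,Q). -/

import Mathlib

open Matrix Finset
open scoped Kronecker ComplexOrder

noncomputable section

variable {n m : Type*} [Fintype n] [DecidableEq n] [Fintype m] [DecidableEq m]

/-- A density operator: positive semidefinite with unit trace. -/
def IsDensity (ρ : Matrix n n ℂ) : Prop := ρ.PosSemidef ∧ ρ.trace = 1

/-- A quantum tester on `H₁ ⊗ H₀` with normalization state `ρ` on `H₀`:
a family of positive semidefinite operators summing to `I₁ ⊗ ρ`. -/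
def IsTester {S : Type*} [Fintype S] (T : S → Matrix (m × n) (m × n) ℂ)
    (ρ : Matrix n n ℂ) : Prop :=
  IsDensity ρ ∧ (∀ j, (T j).PosSemidef) ∧
    ∑ j, T j = (1 : Matrix m m ℂ) ⊗ₖ ρ

/-- Two testers are compatible if a joint tester with the correct marginals exists. -/
def TesterCompatible {S S' : Type*} [Fintype S] [Fintype S']
    (A : S → Matrix (m × n) (m × n) ℂ) (B : S' → Matrix (m × n) (m × n) ℂ) : Prop :=
  ∃ (C : S × S' → Matrix (m × n) (m × n) ℂ) (τ : Matrix n n ℂ),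
    IsTester C τ ∧ (∀ j, ∑ k, C (j, k) = A j) ∧ (∀ k, ∑ j, C (j, k) = B k)

/-- λ-compatibility of testers: noisy mixtures become compatible. -/
def TesterLambdaCompatible {S S' : Type*} [Fintype S] [Fintype S']
    (A : S → Matrix (m × n) (m × n) ℂ) (B : S' → Matrix (m × n) (m × n) ℂ)
    (lam : ℝ) : Prop :=
  ∃ (NA : S → Matrix (m × n) (m × n) ℂ) (NB : S' → Matrix (m × n) (m × n) ℂ)
    (ρ' σ' : Matrix n n ℂ), IsTester NA ρ' ∧ IsTester NB σ' ∧
    TesterCompatible (fun j => (1 - lam) • A j + lam • NA j)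
      (fun k => (1 - lam) • B k + lam • NB k)

/-- The robustness of incompatibility of two testers. -/
noncomputable def TesterRobustness {S S' : Type*} [Fintype S] [Fintype S']
    (A : S → Matrix (m × n) (m × n) ℂ) (B : S' → Matrix (m × n) (m × n) ℂ) : ℝ :=
  sInf {lam : ℝ | lam ∈ Set.Icc (0 : ℝ) 1 ∧ TesterLambdaCompatible A B lam}

/-- The robustness of state incompatibility. -/
noncomputable def StateRobustness (ρ σ : Matrix n n ℂ) : ℝ :=
  sInf {lam : ℝ | lam ∈ Set.Icc (0 : ℝ) 1 ∧ ∃ ρ' σ' : Matrix n n ℂ,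
    IsDensity ρ' ∧ IsDensity σ' ∧
    (1 - lam) • ρ + lam • ρ' = (1 - lam) • σ + lam • σ'}

/-- The trace norm of a matrix, as the sum of its singular values. -/
noncomputable def traceNorm (X : Matrix n n ℂ) : ℝ :=
  ∑ i, Real.sqrt ((Matrix.posSemidef_conjTranspose_mul_self X).1.eigenvalues i)

/-- Inverse of the square root of a Hermitian matrix, taken on its support. -/
noncomputable def invSqrt {ρ : Matrix n n ℂ} (hρ : ρ.IsHermitian) : Matrix n n ℂ :=
  (Matrix.IsHermitian.eigenvectorUnitary hρ : Matrix n n ℂ) *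
    Matrix.diagonal (fun i => if hρ.eigenvalues i = 0 then (0 : ℂ)
      else ((Real.sqrt (hρ.eigenvalues i))⁻¹ : ℝ)) *
    (Matrix.IsHermitian.eigenvectorUnitary hρ : Matrix n n ℂ)ᴴ

/-- Orthogonal projection onto the support of a Hermitian matrix. -/
noncomputable def suppProj {ρ : Matrix n n ℂ} (hρ : ρ.IsHermitian) : Matrix n n ℂ :=
  (Matrix.IsHermitian.eigenvectorUnitary hρ : Matrix n n ℂ) *
    Matrix.diagonal (fun i => if hρ.eigenvalues i = 0 then (0 : ℂ) else 1) *
    (Matrix.IsHermitian.eigenvectorUnitary hρ : Matrix n n ℂ)ᴴ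

/-- A POVM with unit `e`: positive semidefinite operators summing to `e`. -/
def IsPOVMOn {S : Type*} [Fintype S] (e : Matrix n n ℂ) (P : S → Matrix n n ℂ) : Prop :=
  (∀ j, (P j).PosSemidef) ∧ ∑ j, P j = e

/-- Compatibility of POVMs with unit `e`. -/
def POVMCompatibleOn {S S' : Type*} [Fintype S] [Fintype S'] (e : Matrix n n ℂ)
    (P : S → Matrix n n ℂ) (Q : S' → Matrix n n ℂ) : Prop :=
  ∃ R : S × S' → Matrix n n ℂ, IsPOVMOn e R ∧
    (∀ j, ∑ k, R (j, k) = P j) ∧ (∀ k, ∑ j, R (j, k) = Q k)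

/-- λ-compatibility of POVMs with unit `e`. -/
def POVMLambdaCompatibleOn {S S' : Type*} [Fintype S] [Fintype S'] (e : Matrix n n ℂ)
    (P : S → Matrix n n ℂ) (Q : S' → Matrix n n ℂ) (lam : ℝ) : Prop :=
  ∃ (JP : S → Matrix n n ℂ) (JQ : S' → Matrix n n ℂ),
    IsPOVMOn e JP ∧ IsPOVMOn e JQ ∧
    POVMCompatibleOn e (fun j => (1 - lam) • P j + lam • JP j)
      (fun k => (1 - lam) • Q k + lam • JQ k)

/-- The robustness of incompatibility of two POVMs with unit `e`. -/
noncomputable def POVMRobustnessOn {S S' : Type*} [Fintype S] [Fintype S'] (e : Matrix n n ℂ)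
    (P : S → Matrix n n ℂ) (Q : S' → Matrix n n ℂ) : ℝ :=
  sInf {lam : ℝ | lam ∈ Set.Icc (0 : ℝ) 1 ∧ POVMLambdaCompatibleOn e P Q lam}

/-- The canonical POVM associated with a tester with normalization state `ρ`. -/
noncomputable def canonicalPOVM {S : Type*} [Fintype S]
    (T : S → Matrix (m × n) (m × n) ℂ) {ρ : Matrix n n ℂ} (hρ : ρ.IsHermitian)
    (j : S) : Matrix (m × n) (m × n) ℂ :=
  ((1 : Matrix m m ℂ) ⊗ₖ invSqrt hρ) * T j * ((1 : Matrix m m ℂ) ⊗ₖ invSqrt hρ)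

end

section stmt15aux

variable {n m : Type*} [Fintype n] [DecidableEq n] [Fintype m] [DecidableEq m]

private lemma udu_mul {ρ : Matrix n n ℂ} (hρ : ρ.IsHermitian) (d1 d2 : n → ℂ) :
    ((hρ.eigenvectorUnitary : Matrix n n ℂ) * Matrix.diagonal d1 *
        (hρ.eigenvectorUnitary : Matrix n n ℂ)ᴴ) *
      ((hρ.eigenvectorUnitary : Matrix n n ℂ) * Matrix.diagonal d2 *
        (hρ.eigenvectorUnitary : Matrix n n ℂ)ᴴ) =
      (hρ.eigenvectorUnitary : Matrix n n ℂ) * Matrix.diagonal (fun i => d1 i * d2 i) *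
        (hρ.eigenvectorUnitary : Matrix n n ℂ)ᴴ := by
  have hU : (hρ.eigenvectorUnitary : Matrix n n ℂ)ᴴ * (hρ.eigenvectorUnitary : Matrix n n ℂ)
      = 1 := by
    simpa [Matrix.star_eq_conjTranspose] using
      Matrix.mem_unitaryGroup_iff'.mp hρ.eigenvectorUnitary.2
  calc ((hρ.eigenvectorUnitary : Matrix n n ℂ) * Matrix.diagonal d1 *
        (hρ.eigenvectorUnitary : Matrix n n ℂ)ᴴ) *
      ((hρ.eigenvectorUnitary : Matrix n n ℂ) * Matrix.diagonal d2 *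
        (hρ.eigenvectorUnitary : Matrix n n ℂ)ᴴ)
      = (hρ.eigenvectorUnitary : Matrix n n ℂ) * Matrix.diagonal d1 *
        (((hρ.eigenvectorUnitary : Matrix n n ℂ)ᴴ * (hρ.eigenvectorUnitary : Matrix n n ℂ)) *
          (Matrix.diagonal d2 * (hρ.eigenvectorUnitary : Matrix n n ℂ)ᴴ)) := by
        simp only [Matrix.mul_assoc]
    _ = (hρ.eigenvectorUnitary : Matrix n n ℂ) * (Matrix.diagonal d1 * Matrix.diagonal d2) *
        (hρ.eigenvectorUnitary : Matrix n n ℂ)ᴴ := by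
        rw [hU, Matrix.one_mul]; simp only [Matrix.mul_assoc]
    _ = (hρ.eigenvectorUnitary : Matrix n n ℂ) * Matrix.diagonal (fun i => d1 i * d2 i) *
        (hρ.eigenvectorUnitary : Matrix n n ℂ)ᴴ := by
        rw [Matrix.diagonal_mul_diagonal]

noncomputable def Matrix.PosSemidef.sqrt {ρ : Matrix n n ℂ} (hρ : ρ.PosSemidef) : Matrix n n ℂ :=
  (hρ.1.eigenvectorUnitary : Matrix n n ℂ) *
    Matrix.diagonal (fun i => ((Real.sqrt (hρ.1.eigenvalues i) : ℝ) : ℂ)) *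
    (hρ.1.eigenvectorUnitary : Matrix n n ℂ)ᴴ

lemma Matrix.PosSemidef.sqrt_mul_self {ρ : Matrix n n ℂ} (hρ : ρ.PosSemidef) :
    hρ.sqrt * hρ.sqrt = ρ := by
  rw [Matrix.PosSemidef.sqrt, udu_mul]
  refine Eq.trans ?_ hρ.1.spectral_theorem.symm
  congr 2
  refine congrArg _ (funext fun i => ?_)
  rw [← Complex.ofReal_mul, Real.mul_self_sqrt (hρ.eigenvalues_nonneg i)]
  rfl

lemma Matrix.PosSemidef.posSemidef_sqrt {ρ : Matrix n n ℂ} (hρ : ρ.PosSemidef) :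
    hρ.sqrt.PosSemidef :=
  Matrix.PosSemidef.mul_mul_conjTranspose_same
    (posSemidef_diagonal_iff.mpr fun i => Complex.zero_le_real.mpr (Real.sqrt_nonneg _)) _

lemma Matrix.posSemidef_iff_eq_transpose_mul_self {A : Matrix n n ℂ} :
    A.PosSemidef ↔ ∃ B : Matrix n n ℂ, A = Bᴴ * B := by
  classical
  constructor
  · intro h
    exact ⟨h.sqrt, by rw [h.posSemidef_sqrt.1.eq, h.sqrt_mul_self]⟩
  · rintro ⟨B, rfl⟩
    exact posSemidef_conjTranspose_mul_self B

private lemma sqrt_repr {ρ : Matrix n n ℂ} (hρ : ρ.PosSemidef) :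
    hρ.sqrt = (hρ.1.eigenvectorUnitary : Matrix n n ℂ) *
      Matrix.diagonal (fun i => ((Real.sqrt (hρ.1.eigenvalues i) : ℝ) : ℂ)) *
      (hρ.1.eigenvectorUnitary : Matrix n n ℂ)ᴴ := rfl

private lemma rho_repr {ρ : Matrix n n ℂ} (hρ : ρ.IsHermitian) :
    ρ = (hρ.eigenvectorUnitary : Matrix n n ℂ) *
      Matrix.diagonal (fun i => ((hρ.eigenvalues i : ℝ) : ℂ)) *
      (hρ.eigenvectorUnitary : Matrix n n ℂ)ᴴ := hρ.spectral_theorem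

private lemma sqrt_mul_invSqrt {ρ : Matrix n n ℂ} (hρ : ρ.PosSemidef) :
    hρ.sqrt * invSqrt hρ.1 = suppProj hρ.1 := by
  rw [sqrt_repr hρ, invSqrt, suppProj, udu_mul]
  congr 2
  refine congrArg _ (funext fun i => ?_)
  rcases eq_or_ne (hρ.1.eigenvalues i) 0 with h | h
  · simp [h]
  · have hpos : 0 < Real.sqrt (hρ.1.eigenvalues i) :=
      Real.sqrt_pos.mpr (lt_of_le_of_ne (hρ.eigenvalues_nonneg i) (Ne.symm h))
    simp only [h, if_neg h, if_false]
    rw [← Complex.ofReal_mul, mul_inv_cancel₀ hpos.ne']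
    simp

private lemma invSqrt_mul_sqrt {ρ : Matrix n n ℂ} (hρ : ρ.PosSemidef) :
    invSqrt hρ.1 * hρ.sqrt = suppProj hρ.1 := by
  rw [sqrt_repr hρ, invSqrt, suppProj, udu_mul]
  congr 2
  refine congrArg _ (funext fun i => ?_)
  rcases eq_or_ne (hρ.1.eigenvalues i) 0 with h | h
  · simp [h]
  · have hpos : 0 < Real.sqrt (hρ.1.eigenvalues i) :=
      Real.sqrt_pos.mpr (lt_of_le_of_ne (hρ.eigenvalues_nonneg i) (Ne.symm h))
    simp only [h, if_neg h, if_false]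
    rw [← Complex.ofReal_mul, inv_mul_cancel₀ hpos.ne']
    simp

private lemma supp_mul_sqrt {ρ : Matrix n n ℂ} (hρ : ρ.PosSemidef) :
    suppProj hρ.1 * hρ.sqrt = hρ.sqrt := by
  rw [sqrt_repr hρ, suppProj, udu_mul]
  congr 2
  refine congrArg _ (funext fun i => ?_)
  rcases eq_or_ne (hρ.1.eigenvalues i) 0 with h | h
  · simp [h]
  · simp [h]

private lemma sqrt_supp_sqrt {ρ : Matrix n n ℂ} (hρ : ρ.PosSemidef) :
    hρ.sqrt * suppProj hρ.1 * hρ.sqrt = ρ := by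
  rw [Matrix.mul_assoc, supp_mul_sqrt hρ, hρ.sqrt_mul_self]

private lemma supp_mul_rho {ρ : Matrix n n ℂ} (hρ : ρ.PosSemidef) :
    suppProj hρ.1 * ρ = ρ := by
  have h2 : suppProj hρ.1 * ρ = suppProj hρ.1 *
      ((hρ.1.eigenvectorUnitary : Matrix n n ℂ) *
        Matrix.diagonal (fun i => ((hρ.1.eigenvalues i : ℝ) : ℂ)) *
        (hρ.1.eigenvectorUnitary : Matrix n n ℂ)ᴴ) :=
    congrArg (fun X => suppProj hρ.1 * X) (rho_repr hρ.1)
  rw [h2, suppProj, udu_mul]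
  have h3 : (fun i => (if hρ.1.eigenvalues i = 0 then (0 : ℂ) else 1) *
      ((hρ.1.eigenvalues i : ℝ) : ℂ)) = fun i => ((hρ.1.eigenvalues i : ℝ) : ℂ) := by
    funext i
    rcases eq_or_ne (hρ.1.eigenvalues i) 0 with h | h
    · simp [h]
    · simp [h]
  rw [h3]
  exact (rho_repr hρ.1).symm

private lemma rho_mul_supp {ρ : Matrix n n ℂ} (hρ : ρ.PosSemidef) :
    ρ * suppProj hρ.1 = ρ := by
  have h2 : ρ * suppProj hρ.1 =
      ((hρ.1.eigenvectorUnitary : Matrix n n ℂ) *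
        Matrix.diagonal (fun i => ((hρ.1.eigenvalues i : ℝ) : ℂ)) *
        (hρ.1.eigenvectorUnitary : Matrix n n ℂ)ᴴ) * suppProj hρ.1 :=
    congrArg (fun X => X * suppProj hρ.1) (rho_repr hρ.1)
  rw [h2, suppProj, udu_mul]
  have h3 : (fun i => ((hρ.1.eigenvalues i : ℝ) : ℂ) *
      (if hρ.1.eigenvalues i = 0 then (0 : ℂ) else 1)) =
      fun i => ((hρ.1.eigenvalues i : ℝ) : ℂ) := by
    funext i
    rcases eq_or_ne (hρ.1.eigenvalues i) 0 with h | h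
    · simp [h]
    · simp [h]
  rw [h3]
  exact (rho_repr hρ.1).symm

private lemma suppProj_posSemidef {ρ : Matrix n n ℂ} (hρ : ρ.IsHermitian) :
    (suppProj hρ).PosSemidef := by
  rw [suppProj]
  refine Matrix.PosSemidef.mul_mul_conjTranspose_same ?_ _
  refine Matrix.posSemidef_diagonal_iff.mpr fun i => ?_
  rcases eq_or_ne (hρ.eigenvalues i) 0 with h | h
  · simp [h]
  · simp [h, zero_le_one]

private lemma kron_conjTranspose {N N' : Type*} [Fintype N] [Fintype N']
    (A : Matrix N N ℂ) (B : Matrix N' N' ℂ) :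
    (A ⊗ₖ B)ᴴ = Aᴴ ⊗ₖ Bᴴ := by
  ext ⟨i1, i2⟩ ⟨j1, j2⟩
  simp [Matrix.conjTranspose_apply, Matrix.kroneckerMap_apply, mul_comm]

private lemma one_kron_posSemidef {X : Matrix n n ℂ} (hX : X.PosSemidef) :
    ((1 : Matrix m m ℂ) ⊗ₖ X).PosSemidef := by
  obtain ⟨B, rfl⟩ := Matrix.posSemidef_iff_eq_transpose_mul_self.mp hX
  have : ((1 : Matrix m m ℂ) ⊗ₖ B)ᴴ * ((1 : Matrix m m ℂ) ⊗ₖ B) =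
      (1 : Matrix m m ℂ) ⊗ₖ (Bᴴ * B) := by
    rw [kron_conjTranspose, Matrix.conjTranspose_one, ← Matrix.mul_kronecker_mul,
      Matrix.one_mul]
  rw [← this]
  exact Matrix.posSemidef_conjTranspose_mul_self _

private lemma sum_posSemidef_eq_zero {ι N : Type*} [Fintype ι] [Fintype N] [DecidableEq N]
    {M : ι → Matrix N N ℂ} (h : ∀ i, (M i).PosSemidef)
    (hs : ∑ i, M i = 0) (i : ι) : M i = 0 := by
  have key : ∀ x : N → ℂ, M i *ᵥ x = 0 := by
    intro x
    have hsum : ∑ j, (star x ⬝ᵥ M j *ᵥ x) = 0 := by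
      have h0 : (∑ j, M j) *ᵥ x = 0 := by rw [hs, Matrix.zero_mulVec]
      have hmv : (∑ j, M j) *ᵥ x = ∑ j, M j *ᵥ x := by
        ext a
        simp only [Matrix.mulVec, dotProduct, Matrix.sum_apply, Finset.sum_apply, Finset.sum_mul]
        rw [Finset.sum_comm]
      have hdp : star x ⬝ᵥ (∑ j, M j *ᵥ x) = ∑ j, star x ⬝ᵥ M j *ᵥ x := by
        simp only [dotProduct, Finset.sum_apply, Finset.mul_sum]
        rw [Finset.sum_comm]
      calc ∑ j, (star x ⬝ᵥ M j *ᵥ x) = star x ⬝ᵥ (∑ j, M j *ᵥ x) := hdp.symm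
        _ = star x ⬝ᵥ (∑ j, M j) *ᵥ x := by rw [hmv]
        _ = 0 := by rw [h0, dotProduct_zero]
    have hterm : star x ⬝ᵥ M i *ᵥ x = 0 := by
      have := (Finset.sum_eq_zero_iff_of_nonneg
        (fun j _ => (h j).dotProduct_mulVec_nonneg x)).mp hsum
      exact this i (Finset.mem_univ i)
    exact ((h i).dotProduct_mulVec_zero_iff x).mp hterm
  ext a b
  have := congrFun (key (Pi.single b 1)) a
  simpa using this

private lemma psd_conj_zero {N : Type*} [Fintype N] {K T : Matrix N N ℂ}
    (hT : T.PosSemidef) (hK : K.IsHermitian) (h : K * T * K = 0) :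
    T * K = 0 ∧ K * T = 0 := by
  classical
  obtain ⟨B, rfl⟩ := Matrix.posSemidef_iff_eq_transpose_mul_self.mp hT
  have h1 : (B * K)ᴴ * (B * K) = 0 := by
    calc (B * K)ᴴ * (B * K) = Kᴴ * (Bᴴ * B) * K := by
          rw [Matrix.conjTranspose_mul]; simp only [Matrix.mul_assoc]
      _ = K * (Bᴴ * B) * K := by rw [hK.eq]
      _ = 0 := h
  have hBK : B * K = 0 := Matrix.conjTranspose_mul_self_eq_zero.mp h1
  have hTK : Bᴴ * B * K = 0 := by rw [Matrix.mul_assoc, hBK, Matrix.mul_zero]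
  refine ⟨hTK, ?_⟩
  have := congrArg Matrix.conjTranspose hTK
  rw [Matrix.conjTranspose_mul, Matrix.conjTranspose_mul, hK.eq,
    Matrix.conjTranspose_conjTranspose, ← Matrix.mul_assoc,
    Matrix.conjTranspose_zero] at this
  rwa [Matrix.mul_assoc] at this

/-- The support projection absorbs each tester element. -/
private lemma supp_absorb {S : Type*} [Fintype S] {A : S → Matrix (m × n) (m × n) ℂ}
    {ρ : Matrix n n ℂ} (hρ : ρ.PosSemidef) (hApos : ∀ j, (A j).PosSemidef)
    (hAsum : ∑ j, A j = (1 : Matrix m m ℂ) ⊗ₖ ρ) (j : S) :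
    ((1 : Matrix m m ℂ) ⊗ₖ suppProj hρ.1) * A j *
      ((1 : Matrix m m ℂ) ⊗ₖ suppProj hρ.1) = A j := by
  set Pi1 := suppProj hρ.1 with hPi1
  set K := (1 : Matrix m m ℂ) ⊗ₖ ((1 : Matrix n n ℂ) - Pi1) with hK
  have hPiH : Pi1.IsHermitian := (suppProj_posSemidef hρ.1).1
  have hS_eq : (1 : Matrix m m ℂ) ⊗ₖ Pi1 = 1 - K := by
    have h1 : K + (1 : Matrix m m ℂ) ⊗ₖ Pi1 = 1 := by
      rw [hK, ← Matrix.kronecker_add, sub_add_cancel, Matrix.one_kronecker_one]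
    rw [eq_sub_iff_add_eq, add_comm]
    exact h1
  have hKH : K.IsHermitian := by
    rw [Matrix.IsHermitian, hK, kron_conjTranspose, Matrix.conjTranspose_one,
      Matrix.conjTranspose_sub, Matrix.conjTranspose_one, hPiH.eq]
  have hKrhoK : K * ((1 : Matrix m m ℂ) ⊗ₖ ρ) * K = 0 := by
    rw [hK, ← Matrix.mul_kronecker_mul, ← Matrix.mul_kronecker_mul]
    have hz : ((1 : Matrix n n ℂ) - Pi1) * ρ = 0 := by
      rw [Matrix.sub_mul, Matrix.one_mul, hPi1, supp_mul_rho hρ, sub_self]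
    rw [hz, Matrix.zero_mul, Matrix.kronecker_zero]
  have hsumzero : ∑ i, K * A i * K = 0 := by
    rw [← Finset.sum_mul, ← Finset.mul_sum, hAsum, hKrhoK]
  have hKAK : K * A j * K = 0 := by
    refine sum_posSemidef_eq_zero (fun i => ?_) hsumzero j
    have := (hApos i).mul_mul_conjTranspose_same K
    rwa [hKH.eq] at this
  obtain ⟨hAK, hKA⟩ := psd_conj_zero (hApos j) hKH hKAK
  rw [hS_eq]
  simp [Matrix.sub_mul, Matrix.mul_sub, hKA, hAK]

private lemma conj_canonical {S₀ : Type*} [Fintype S₀] {ρ : Matrix n n ℂ}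
    (hρ : ρ.PosSemidef) (T : S₀ → Matrix (m × n) (m × n) ℂ)
    (hTpos : ∀ j, (T j).PosSemidef) (hTsum : ∑ j, T j = (1 : Matrix m m ℂ) ⊗ₖ ρ) (j : S₀) :
    ((1 : Matrix m m ℂ) ⊗ₖ hρ.sqrt) * canonicalPOVM T hρ.1 j *
      ((1 : Matrix m m ℂ) ⊗ₖ hρ.sqrt) = T j := by
  rw [canonicalPOVM]
  have hassoc : ((1 : Matrix m m ℂ) ⊗ₖ hρ.sqrt) *
      (((1 : Matrix m m ℂ) ⊗ₖ invSqrt hρ.1) * T j *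
        ((1 : Matrix m m ℂ) ⊗ₖ invSqrt hρ.1)) * ((1 : Matrix m m ℂ) ⊗ₖ hρ.sqrt) =
      (((1 : Matrix m m ℂ) ⊗ₖ hρ.sqrt) * ((1 : Matrix m m ℂ) ⊗ₖ invSqrt hρ.1)) * T j *
        (((1 : Matrix m m ℂ) ⊗ₖ invSqrt hρ.1) * ((1 : Matrix m m ℂ) ⊗ₖ hρ.sqrt)) := by
    simp only [Matrix.mul_assoc]
  rw [hassoc, ← Matrix.mul_kronecker_mul, ← Matrix.mul_kronecker_mul, Matrix.one_mul,
    sqrt_mul_invSqrt hρ, invSqrt_mul_sqrt hρ]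
  exact supp_absorb hρ hTpos hTsum j

private lemma tester_index_nonempty {S₀ : Type*} [Fintype S₀] [Nonempty m]
    {ρ : Matrix n n ℂ} (hρtr : ρ.trace = 1) (T : S₀ → Matrix (m × n) (m × n) ℂ)
    (hTsum : ∑ j, T j = (1 : Matrix m m ℂ) ⊗ₖ ρ) : Nonempty S₀ := by
  by_contra hc
  rw [not_nonempty_iff] at hc
  have h0 : (0 : Matrix (m × n) (m × n) ℂ) = (1 : Matrix m m ℂ) ⊗ₖ ρ := by
    rw [← hTsum, Finset.univ_eq_empty, Finset.sum_empty]
  have := congrArg Matrix.trace h0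
  rw [Matrix.trace_zero, Matrix.trace_kronecker, Matrix.trace_one, hρtr, mul_one] at this
  exact (Nat.cast_ne_zero (R := ℂ)).mpr (Fintype.card_ne_zero (α := m)) this.symm

end stmt15aux

/-- for testers with the same normalization state, λ-compatibility
of the canonical POVMs implies λ-compatibility of the testers; hence
`R_T(A,B) ≤ R_M(P,Q)`. -/
theorem stmt15 {n m : Type*} [Fintype n] [DecidableEq n] [Fintype m] [DecidableEq m]
    {S S' : Type*} [Fintype S] [Fintype S']
    (A : S → Matrix (m × n) (m × n) ℂ) (B : S' → Matrix (m × n) (m × n) ℂ)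
    (ρ : Matrix n n ℂ) (hA : IsTester A ρ) (hB : IsTester B ρ) :
    (∀ lam ∈ Set.Icc (0:ℝ) 1,
      POVMLambdaCompatibleOn ((1 : Matrix m m ℂ) ⊗ₖ suppProj hA.1.1.1)
        (canonicalPOVM A hA.1.1.1) (canonicalPOVM B hA.1.1.1) lam →
      TesterLambdaCompatible A B lam) ∧
    TesterRobustness A B ≤
      POVMRobustnessOn ((1 : Matrix m m ℂ) ⊗ₖ suppProj hA.1.1.1)
        (canonicalPOVM A hA.1.1.1) (canonicalPOVM B hA.1.1.1) := by
  classical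
  have hρ : ρ.PosSemidef := hA.1.1
  have hsH : hρ.sqrt.IsHermitian := hρ.posSemidef_sqrt.1
  have hSmH : ((1 : Matrix m m ℂ) ⊗ₖ hρ.sqrt)ᴴ = (1 : Matrix m m ℂ) ⊗ₖ hρ.sqrt := by
    rw [kron_conjTranspose, Matrix.conjTranspose_one, hsH.eq]
  have conjPSD : ∀ X : Matrix (m × n) (m × n) ℂ, X.PosSemidef →
      (((1 : Matrix m m ℂ) ⊗ₖ hρ.sqrt) * X * ((1 : Matrix m m ℂ) ⊗ₖ hρ.sqrt)).PosSemidef := by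
    intro X hX
    have := hX.mul_mul_conjTranspose_same ((1 : Matrix m m ℂ) ⊗ₖ hρ.sqrt)
    rwa [hSmH] at this
  have conjE : ((1 : Matrix m m ℂ) ⊗ₖ hρ.sqrt) * ((1 : Matrix m m ℂ) ⊗ₖ suppProj hA.1.1.1) *
      ((1 : Matrix m m ℂ) ⊗ₖ hρ.sqrt) = (1 : Matrix m m ℂ) ⊗ₖ ρ := by
    rw [← Matrix.mul_kronecker_mul, ← Matrix.mul_kronecker_mul, Matrix.one_mul,
      Matrix.one_mul, sqrt_supp_sqrt hρ]
  have key : ∀ lam : ℝ,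
      POVMLambdaCompatibleOn ((1 : Matrix m m ℂ) ⊗ₖ suppProj hA.1.1.1)
        (canonicalPOVM A hA.1.1.1) (canonicalPOVM B hA.1.1.1) lam →
      TesterLambdaCompatible A B lam := by
    rintro lam ⟨JP, JQ, hJP, hJQ, R, hR, hRA, hRB⟩
    refine ⟨fun j => ((1 : Matrix m m ℂ) ⊗ₖ hρ.sqrt) * JP j * ((1 : Matrix m m ℂ) ⊗ₖ hρ.sqrt),
      fun k => ((1 : Matrix m m ℂ) ⊗ₖ hρ.sqrt) * JQ k * ((1 : Matrix m m ℂ) ⊗ₖ hρ.sqrt),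
      ρ, ρ, ?_, ?_, ?_⟩
    · exact ⟨hA.1, fun j => conjPSD _ (hJP.1 j), by
        rw [← Finset.sum_mul, ← Finset.mul_sum, hJP.2, conjE]⟩
    · exact ⟨hA.1, fun k => conjPSD _ (hJQ.1 k), by
        rw [← Finset.sum_mul, ← Finset.mul_sum, hJQ.2, conjE]⟩
    · refine ⟨fun p => ((1 : Matrix m m ℂ) ⊗ₖ hρ.sqrt) * R p * ((1 : Matrix m m ℂ) ⊗ₖ hρ.sqrt),
        ρ, ⟨hA.1, fun p => conjPSD _ (hR.1 p), by
          rw [← Finset.sum_mul, ← Finset.mul_sum, hR.2, conjE]⟩, ?_, ?_⟩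
      · intro j
        rw [← Finset.sum_mul, ← Finset.mul_sum, hRA j, Matrix.mul_add, Matrix.add_mul,
          Matrix.mul_smul, Matrix.mul_smul, Matrix.smul_mul, Matrix.smul_mul,
          conj_canonical hρ A hA.2.1 hA.2.2 j]
      · intro k
        rw [← Finset.sum_mul, ← Finset.mul_sum, hRB k, Matrix.mul_add, Matrix.add_mul,
          Matrix.mul_smul, Matrix.mul_smul, Matrix.smul_mul, Matrix.smul_mul,
          conj_canonical hρ B hB.2.1 hB.2.2 k]
  refine ⟨fun lam _ h => key lam h, ?_⟩
  have hePSD : ((1 : Matrix m m ℂ) ⊗ₖ suppProj hA.1.1.1).PosSemidef :=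
    one_kron_posSemidef (suppProj_posSemidef hA.1.1.1)
  have mem1 : POVMLambdaCompatibleOn ((1 : Matrix m m ℂ) ⊗ₖ suppProj hA.1.1.1)
      (canonicalPOVM A hA.1.1.1) (canonicalPOVM B hA.1.1.1) 1 := by
    rcases isEmpty_or_nonempty (m × n) with hmn | hmn
    · have triv : ∀ X Y : Matrix (m × n) (m × n) ℂ, X = Y := fun X Y => by
        ext i j; exact isEmptyElim i
      exact ⟨fun _ => 0, fun _ => 0,
        ⟨fun _ => Matrix.PosSemidef.zero, triv _ _⟩,
        ⟨fun _ => Matrix.PosSemidef.zero, triv _ _⟩,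
        ⟨fun _ => 0, ⟨fun _ => Matrix.PosSemidef.zero, triv _ _⟩,
          fun j => triv _ _, fun k => triv _ _⟩⟩
    · have hm : Nonempty m := ⟨hmn.some.1⟩
      have hS : Nonempty S := tester_index_nonempty hA.1.2 A hA.2.2
      have hS' : Nonempty S' := tester_index_nonempty hA.1.2 B hB.2.2
      obtain ⟨j0⟩ := hS
      obtain ⟨k0⟩ := hS'
      set e := (1 : Matrix m m ℂ) ⊗ₖ suppProj hA.1.1.1 with he
      refine ⟨fun j => if j = j0 then e else 0, fun k => if k = k0 then e else 0,
        ⟨fun j => ?_, by simp [Finset.sum_ite_eq']⟩,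
        ⟨fun k => ?_, by simp [Finset.sum_ite_eq']⟩,
        ⟨fun p => if p = (j0, k0) then e else 0,
          ⟨fun p => ?_, by simp [Finset.sum_ite_eq']⟩, ?_, ?_⟩⟩
      · by_cases h : j = j0 <;> simp [h, hePSD, Matrix.PosSemidef.zero]
      · by_cases h : k = k0 <;> simp [h, hePSD, Matrix.PosSemidef.zero]
      · by_cases h : p = (j0, k0) <;> simp [h, hePSD, Matrix.PosSemidef.zero]
      · intro j
        simp only [sub_self, zero_smul, one_smul, zero_add]
        have hsplit : ∀ k : S', (if (j, k) = (j0, k0) then e else (0 : Matrix (m × n) (m × n) ℂ))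
            = if j = j0 then (if k = k0 then e else 0) else 0 := by
          intro k
          by_cases h1 : j = j0 <;> by_cases h2 : k = k0 <;> simp [h1, h2, Prod.ext_iff]
        simp only [hsplit]
        by_cases h1 : j = j0
        · simp [h1, Finset.sum_ite_eq']
        · simp [h1]
      · intro k
        simp only [sub_self, zero_smul, one_smul, zero_add]
        have hsplit : ∀ j : S, (if (j, k) = (j0, k0) then e else (0 : Matrix (m × n) (m × n) ℂ))
            = if k = k0 then (if j = j0 then e else 0) else 0 := by
          intro j
          by_cases h1 : j = j0 <;> by_cases h2 : k = k0 <;> simp [h1, h2, Prod.ext_iff]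
        simp only [hsplit]
        by_cases h2 : k = k0
        · simp [h2, Finset.sum_ite_eq']
        · simp [h2]
  apply csInf_le_csInf
  · exact ⟨0, fun x hx => hx.1.1⟩
  · exact ⟨1, ⟨Set.mem_Icc.mpr ⟨zero_le_one, le_rfl⟩, mem1⟩⟩
  · rintro lam ⟨h1, h2⟩
    exact ⟨h1, key lam h2⟩
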